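/- Let a and b be integers greater than 1, and consider the additive group ℤ with generating sets A = {a^i : i ≥ 0} and B = {b^j : j ≥ 0}, with associated metrics d_A and d_B. Then the metrics d_A and d_B are bi-Lipschitz equivalent if and only if there exist positive integers m and n such that a^m = b^n. -/

import Mathlib

/-- The word length of the integer `x` with respect to the generating set
`{a^i : i ≥ 0}` of the additive group ℤ: the least `k` such that `x` is a sum of
`k` terms, each of the form `a^i` or `-a^i` with `i` a nonnegative integer. -/
noncomputable def geomLength (a : ℤ) (x : ℤ) : ℕ :=
  sInf {n : ℕ | ∃ l : List ℤ, l.length = n ∧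
    (∀ z ∈ l, ∃ i : ℕ, z = a ^ i ∨ z = -a ^ i) ∧ l.sum = x}

/-- The (real-valued) metric on ℤ associated to the generating set `{a^i : i ≥ 0}`:
`d_A(x,y) = ℓ_A(x - y)`. -/
noncomputable def geomDist (a : ℤ) (x y : ℤ) : ℝ :=
  (geomLength a (x - y) : ℝ)


namespace GLen

def repSet (a x : ℤ) : Set ℕ := {n | ∃ l : List ℤ, l.length = n ∧
    (∀ z ∈ l, ∃ i : ℕ, z = a ^ i ∨ z = -a ^ i) ∧ l.sum = x}

lemma geomLength_def (a x : ℤ) : geomLength a x = sInf (repSet a x) := rfl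

lemma repSet_nonempty (a x : ℤ) : (repSet a x).Nonempty := by
  rcases le_or_gt 0 x with h | h
  · refine ⟨x.toNat, List.replicate x.toNat 1, by simp, ?_, ?_⟩
    · intro z hz
      have := List.eq_of_mem_replicate hz
      exact ⟨0, by simp [this]⟩
    · simp [List.sum_replicate]; omega
  · refine ⟨(-x).toNat, List.replicate (-x).toNat (-1), by simp, ?_, ?_⟩
    · intro z hz
      have := List.eq_of_mem_replicate hz
      exact ⟨0, by simp [this]⟩
    · simp [List.sum_replicate]; omega

lemma exists_min_list (a x : ℤ) : ∃ l : List ℤ, l.length = geomLength a x ∧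
    (∀ z ∈ l, ∃ i : ℕ, z = a ^ i ∨ z = -a ^ i) ∧ l.sum = x :=
  Nat.sInf_mem (repSet_nonempty a x)

lemma geomLength_le (a x : ℤ) {l : List ℤ}
    (h1 : ∀ z ∈ l, ∃ i : ℕ, z = a ^ i ∨ z = -a ^ i) (h2 : l.sum = x) :
    geomLength a x ≤ l.length :=
  Nat.sInf_le ⟨l, rfl, h1, h2⟩

lemma geomLength_pow_le (a : ℤ) (i : ℕ) : geomLength a (a ^ i) ≤ 1 := by
  simpa using geomLength_le a (a ^ i) (l := [a ^ i]) (by intro z hz; simp at hz; exact ⟨i, Or.inl hz⟩) (by simp)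

lemma geomLength_add_le (a x y : ℤ) :
    geomLength a (x + y) ≤ geomLength a x + geomLength a y := by
  obtain ⟨l, hl, hl1, hl2⟩ := exists_min_list a x
  obtain ⟨m, hm, hm1, hm2⟩ := exists_min_list a y
  have := geomLength_le a (x + y) (l := l ++ m) ?_ (by simp [hl2, hm2])
  · simpa [hl, hm] using this
  · intro z hz
    rcases List.mem_append.1 hz with h | h
    exacts [hl1 z h, hm1 z h]

lemma sum_map_neg (l : List ℤ) : (l.map Neg.neg).sum = -l.sum := by
  induction l with
  | nil => simp
  | cons z l ih => simp [ih]; ring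

lemma geomLength_neg_le (a x : ℤ) : geomLength a (-x) ≤ geomLength a x := by
  obtain ⟨l, hl, hl1, hl2⟩ := exists_min_list a x
  have := geomLength_le a (-x) (l := l.map Neg.neg) ?_ ?_
  · simpa [hl] using this
  · intro z hz
    obtain ⟨w, hw, rfl⟩ := List.mem_map.1 hz
    obtain ⟨i, hi | hi⟩ := hl1 w hw
    · exact ⟨i, Or.inr (by rw [hi])⟩
    · exact ⟨i, Or.inl (by rw [hi]; ring)⟩
  · rw [sum_map_neg, hl2]

lemma geomLength_sum_le (a : ℤ) (C : ℕ) (l : List ℤ)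
    (h : ∀ z ∈ l, geomLength a z ≤ C) : geomLength a l.sum ≤ C * l.length := by
  induction l with
  | nil => simp [geomLength_def, repSet]
  | cons z l ih =>
    have h1 : geomLength a (z + l.sum) ≤ geomLength a z + geomLength a l.sum :=
      geomLength_add_le a z l.sum
    have h2 := ih (fun w hw => h w (List.mem_cons_of_mem z hw))
    have h3 := h z List.mem_cons_self
    simp only [List.sum_cons, List.length_cons]
    calc geomLength a (z + l.sum) ≤ C + C * l.length := by omega
    _ = C * (l.length + 1) := by ring

lemma pos_of_ne_zero {a x : ℤ} (hx : x ≠ 0) : 0 < geomLength a x := by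
  rcases Nat.eq_zero_or_pos (geomLength a x) with h | h
  · exfalso
    obtain ⟨l, hl, _, hsum⟩ := exists_min_list a x
    rw [h, List.length_eq_zero_iff] at hl
    exact hx (by simp [hl] at hsum; omega)
  · exact h


/-- If `a^m = b^n` then every power of `a` has `b`-length at most
`C := sup_{r<m} ℓ_b(a^r)`. -/
lemma pow_length_bounded (a b : ℤ) (m n : ℕ) (hm : 0 < m) (hn : 0 < n)
    (hab : a ^ m = b ^ n) (i : ℕ) :
    geomLength b (a ^ i) ≤ (Finset.range m).sup (fun r => geomLength b (a ^ r)) := by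
  set C := (Finset.range m).sup (fun r => geomLength b (a ^ r)) with hC
  obtain ⟨l, hl, hl1, hl2⟩ := exists_min_list b (a ^ (i % m))
  have hrC : geomLength b (a ^ (i % m)) ≤ C :=
    Finset.le_sup (f := fun r => geomLength b (a ^ r))
      (Finset.mem_range.2 (Nat.mod_lt i hm))
  have key : geomLength b (a ^ i) ≤ (l.map (· * b ^ (n * (i / m)))).length := by
    apply geomLength_le
    · intro z hz
      obtain ⟨w, hw, rfl⟩ := List.mem_map.1 hz
      obtain ⟨j, hj | hj⟩ := hl1 w hw
      · exact ⟨j + n * (i / m), Or.inl (by rw [hj, pow_add])⟩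
      · exact ⟨j + n * (i / m), Or.inr (by rw [hj, pow_add]; ring)⟩
    · have hmap : ∀ L : List ℤ, (L.map (· * b ^ (n * (i / m)))).sum = L.sum * b ^ (n * (i / m)) := by
        intro L
        induction L with
        | nil => simp
        | cons z L ih => simp [ih]; ring
      rw [hmap, hl2]
      have : a ^ i = a ^ (i % m) * a ^ (m * (i / m)) := by
        rw [← pow_add, Nat.mod_add_div]
      rw [this, pow_mul, ← hab, ← pow_mul]
  simpa [hl] using key.trans (by simp [hl]; omega)

lemma length_le_mul (a b : ℤ) (m n : ℕ) (hm : 0 < m) (hn : 0 < n)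
    (hab : a ^ m = b ^ n) (x : ℤ) :
    geomLength b x ≤ ((Finset.range m).sup (fun r => geomLength b (a ^ r))) *
      geomLength a x := by
  set C := (Finset.range m).sup (fun r => geomLength b (a ^ r)) with hC
  obtain ⟨l, hl, hl1, hl2⟩ := exists_min_list a x
  have key := geomLength_sum_le b C l ?_
  · rw [hl2] at key; rw [← hl]; exact key
  · intro z hz
    obtain ⟨j, hj | hj⟩ := hl1 z hz
    · rw [hj]; exact pow_length_bounded a b m n hm hn hab j
    · rw [hj]
      exact le_trans (geomLength_neg_le b (a ^ j)) (pow_length_bounded a b m n hm hn hab j)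

/-- The easy direction. -/
lemma easy_dir (a b : ℤ)
    (h : ∃ m n : ℕ, 0 < m ∧ 0 < n ∧ a ^ m = b ^ n) :
    ∃ K : ℝ, 1 ≤ K ∧ ∀ x y : ℤ,
      (1 / K) * geomDist a x y ≤ geomDist b x y ∧
      geomDist b x y ≤ K * geomDist a x y := by
  obtain ⟨m, n, hm, hn, hab⟩ := h
  set Cab := (Finset.range m).sup (fun r => geomLength b (a ^ r)) with hCab
  set Cba := (Finset.range n).sup (fun r => geomLength a (b ^ r)) with hCba
  set N : ℕ := max (max Cab Cba) 1 with hN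
  refine ⟨(N : ℝ), by exact_mod_cast Nat.le_of_lt_succ (by omega), ?_⟩
  have hNpos : (0:ℝ) < N := by positivity
  have hCab : (Cab : ℝ) ≤ N := by exact_mod_cast le_trans (le_max_left Cab Cba) (le_max_left _ 1)
  have hCba : (Cba : ℝ) ≤ N := by exact_mod_cast le_trans (le_max_right Cab Cba) (le_max_left _ 1)
  intro x y
  have h1 : geomLength b (x - y) ≤ Cab * geomLength a (x - y) :=
    length_le_mul a b m n hm hn hab (x - y)
  have h2 : geomLength a (x - y) ≤ Cba * geomLength b (x - y) :=
    length_le_mul b a n m hn hm hab.symm (x - y)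
  constructor
  · rw [one_div, inv_mul_le_iff₀ hNpos]
    show (geomLength a (x - y) : ℝ) ≤ N * geomLength b (x - y)
    calc (geomLength a (x - y) : ℝ) ≤ (Cba : ℝ) * geomLength b (x - y) := by
          exact_mod_cast h2
    _ ≤ (N : ℝ) * geomLength b (x - y) := by
          gcongr
  · show (geomLength b (x - y) : ℝ) ≤ N * geomLength a (x - y)
    calc (geomLength b (x - y) : ℝ) ≤ (Cab : ℝ) * geomLength a (x - y) := by
          exact_mod_cast h1
    _ ≤ (N : ℝ) * geomLength a (x - y) := by
          gcongr


end GLen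

namespace GLen

lemma fract_nat_mul_step (α : ℝ) (n k : ℕ) :
    Int.fract ((k * n : ℕ) * α) = Int.fract ((k : ℝ) * Int.fract ((n : ℝ) * α)) := by
  have h1 : ((k * n : ℕ) : ℝ) * α = (k : ℝ) * Int.fract ((n : ℝ) * α) + ((k : ℕ) * ⌊(n:ℝ) * α⌋ : ℤ) := by
    rw [Int.fract]
    push_cast
    ring
  rw [h1, Int.fract_add_intCast]

lemma fract_ne_of_irrational (α : ℝ) (hα : Irrational α) {i j : ℕ} (hij : i ≠ j) :
    Int.fract ((i : ℝ) * α) ≠ Int.fract ((j : ℝ) * α) := by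
  intro h
  have h2 : ((i : ℝ) - j) * α = ((⌊(i:ℝ)*α⌋ - ⌊(j:ℝ)*α⌋ : ℤ) : ℝ) := by
    rw [Int.fract, Int.fract] at h
    push_cast
    nlinarith [h]
  set m : ℤ := ⌊(i:ℝ)*α⌋ - ⌊(j:ℝ)*α⌋ with hm
  set d : ℤ := (i : ℤ) - j with hdd
  have hd1 : d ≠ 0 := by omega
  have hd0 : (d : ℝ) ≠ 0 := by exact_mod_cast hd1
  have h3 : ((i:ℝ) - j) = (d : ℝ) := by rw [hdd]; push_cast; ring
  have hαeq : α = (m : ℝ) / d := by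
    rw [eq_div_iff hd0, ← h3, mul_comm]
    exact h2
  exact hα ⟨(m : ℚ) / (d : ℚ), by push_cast; rw [hαeq]⟩

/-- Pigeonhole: a positive multiple with fractional part near 0 or near 1. -/
lemma exists_small_step (α : ℝ) (hα : Irrational α) (ε : ℝ) (hε : 0 < ε) :
    ∃ n : ℕ, 0 < n ∧ (Int.fract (n * α) < ε ∨ 1 - ε < Int.fract (n * α)) := by
  obtain ⟨N, hN⟩ := exists_nat_gt (1 / ε)
  have hN0 : 0 < N := by
    rcases Nat.eq_zero_or_pos N with h | h
    · exfalso; rw [h] at hN; simp at hN; nlinarith [one_div_pos.2 hε]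
    · exact h
  have hNR : (0:ℝ) < N := by exact_mod_cast hN0
  have maps : ∀ i ∈ Finset.range (N + 1),
      (⌊(N : ℝ) * Int.fract ((i:ℝ) * α)⌋.toNat) ∈ Finset.range N := by
    intro i _
    have h2 : (N : ℝ) * Int.fract ((i:ℝ) * α) < N :=
      mul_lt_of_lt_one_right hNR (Int.fract_lt_one _)
    have h3 : (⌊(N : ℝ) * Int.fract ((i:ℝ) * α)⌋ : ℤ) < (N : ℤ) := by
      have := Int.floor_le ((N : ℝ) * Int.fract ((i:ℝ) * α))
      exact_mod_cast Int.floor_lt.2 (by exact_mod_cast h2)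
    rw [Finset.mem_range]
    omega
  obtain ⟨i, hi, j, hj, hij, heq⟩ :=
    Finset.exists_ne_map_eq_of_card_lt_of_maps_to (by simp) maps
  -- WLOG i < j
  wlog hlt : i < j generalizing i j
  · exact this j hj i hi hij.symm heq.symm (by omega)
  have hfi : Int.fract ((i:ℝ) * α) = Int.fract ((i:ℝ) * α) := rfl
  have hfj : Int.fract ((j:ℝ) * α) = Int.fract ((j:ℝ) * α) := rfl
  set fi := Int.fract ((i:ℝ) * α)
  set fj := Int.fract ((j:ℝ) * α)
  have hfloor : ⌊(N:ℝ) * fi⌋ = ⌊(N:ℝ) * fj⌋ := by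
    have h0i : (0:ℤ) ≤ ⌊(N:ℝ) * fi⌋ := Int.floor_nonneg.2 (mul_nonneg hNR.le (Int.fract_nonneg _))
    have h0j : (0:ℤ) ≤ ⌊(N:ℝ) * fj⌋ := Int.floor_nonneg.2 (mul_nonneg hNR.le (Int.fract_nonneg _))
    omega
  have hclose : |fj - fi| < 1 / N := by
    have h1 : |(N:ℝ) * fj - (N:ℝ) * fi| < 1 := Int.abs_sub_lt_one_of_floor_eq_floor hfloor.symm
    rw [abs_lt] at h1 ⊢
    constructor
    · rw [neg_lt, ← neg_sub]
      rw [lt_div_iff₀ hNR]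
      nlinarith [h1.1]
    · rw [lt_div_iff₀ hNR]
      nlinarith [h1.2]
  have h1N : 1 / (N:ℝ) < ε := by
    rw [div_lt_iff₀ hNR]
    rw [div_lt_iff₀ hε] at hN
    nlinarith
  refine ⟨j - i, by omega, ?_⟩
  have hd : Int.fract (((j - i : ℕ):ℝ) * α) = Int.fract (fj - fi) := by
    have : ((j - i : ℕ) : ℝ) * α = (fj - fi) + ((⌊(j:ℝ)*α⌋ - ⌊(i:ℝ)*α⌋ : ℤ) : ℝ) := by
      show ((j - i : ℕ) : ℝ) * α = (Int.fract ((j:ℝ)*α) - Int.fract ((i:ℝ)*α)) + ((⌊(j:ℝ)*α⌋ - ⌊(i:ℝ)*α⌋ : ℤ) : ℝ)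
      rw [Int.fract, Int.fract]
      push_cast [Nat.cast_sub hlt.le]
      ring
    rw [this, Int.fract_add_intCast]
  have hne : fj - fi ≠ 0 := sub_ne_zero.2 (fract_ne_of_irrational α hα hij.symm)
  rcases lt_or_gt_of_ne hne with hneg | hpos
  · -- fj - fi ∈ (-1/N, 0): fract = 1 + (fj - fi) > 1 - 1/N > 1 - ε
    right
    have hmem : Int.fract (fj - fi) = fj - fi + 1 := by
      have : ⌊fj - fi⌋ = -1 := by
        rw [Int.floor_eq_iff]
        constructor
        · push_cast
          have := Int.fract_lt_one ((j:ℝ)*α)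
          have := Int.fract_nonneg ((i:ℝ)*α)
          rw [hfj, hfi] at *
          linarith [Int.fract_lt_one ((i:ℝ)*α), Int.fract_nonneg ((j:ℝ)*α)]
        · push_cast; linarith
      rw [Int.fract, this]
      push_cast; ring
    rw [hd, hmem]
    have := abs_lt.1 hclose
    linarith
  · left
    have hmem : Int.fract (fj - fi) = fj - fi := by
      rw [Int.fract_eq_self]
      refine ⟨hpos.le, ?_⟩
      have := abs_lt.1 hclose
      have h1N' : 1 / (N:ℝ) ≤ 1 := by
        rw [div_le_one hNR]; exact_mod_cast hN0
      linarith
    rw [hd, hmem]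
    have := abs_lt.1 hclose
    linarith

end GLen

namespace GLen2
open GLen in
lemma dense_fract (α : ℝ) (hα : Irrational α) (t ε : ℝ)
    (ht0 : 0 ≤ t) (ht1 : t ≤ 1) (hε : 0 < ε) :
    ∃ i : ℕ, |Int.fract ((i:ℝ) * α) - t| < ε := by
  obtain ⟨n, hn, hcase⟩ := GLen.exists_small_step α hα ε hε
  have hfr0 : Int.fract ((n:ℝ) * α) ≠ 0 := by
    have h := GLen.fract_ne_of_irrational α hα (i := n) (j := 0) (by omega)
    simpa using h
  rcases hcase with hsmall | hbig
  · -- β = fract(nα) ∈ (0, ε)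
    set β := Int.fract ((n:ℝ) * α) with hβ
    have hβ0 : 0 < β := lt_of_le_of_ne (Int.fract_nonneg _) (Ne.symm hfr0)
    set k := ⌈t / β⌉₊ with hk
    have hk1 : t ≤ (k:ℝ) * β := by
      have := Nat.le_ceil (t / β)
      calc t = (t / β) * β := by field_simp
      _ ≤ (k:ℝ) * β := by gcongr
    have hk2 : (k:ℝ) * β < t + β := by
      have h2 := Nat.ceil_lt_add_one (a := t / β) (by positivity)
      calc (k:ℝ) * β < (t/β + 1) * β := by gcongr
      _ = t + β := by field_simp
    rcases lt_or_ge ((k:ℝ) * β) 1 with h1 | h1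
    · refine ⟨k * n, ?_⟩
      rw [fract_nat_mul_step, ← hβ]
      rw [Int.fract_eq_self.2 ⟨by positivity, h1⟩]
      rw [abs_lt]
      constructor <;> linarith
    · -- use k - 1
      have hkpos : 1 ≤ k := by
        by_contra h
        push_neg at h
        interval_cases k
        simp at h1
        linarith
      refine ⟨(k - 1) * n, ?_⟩
      rw [fract_nat_mul_step, ← hβ]
      have hcast : ((k - 1 : ℕ) : ℝ) = (k : ℝ) - 1 := by
        push_cast [Nat.cast_sub hkpos]; ring
      have hlow : ((k-1:ℕ):ℝ) * β < t := by
        rw [hcast]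
        have h2 := Nat.ceil_lt_add_one (a := t / β) (by positivity)
        have : (k:ℝ) - 1 < t / β := by rw [hk]; linarith
        calc ((k:ℝ) - 1) * β < (t/β) * β := by gcongr
        _ = t := by field_simp
      rw [Int.fract_eq_self.2 ⟨by positivity, by linarith⟩]
      rw [abs_lt]
      rw [hcast]
      constructor <;> nlinarith
  · -- fract(nα) = 1 - γ, γ ∈ (0, ε)
    set γ := 1 - Int.fract ((n:ℝ) * α) with hγ
    have hγ0 : 0 < γ := by
      have := Int.fract_lt_one ((n:ℝ) * α)
      simp only [hγ]; linarith
    have hγε : γ < ε := by simp only [hγ]; linarith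
    rcases lt_or_ge t γ with htγ | htγ
    · refine ⟨0, ?_⟩
      have h00 : Int.fract (((0:ℕ):ℝ) * α) = 0 := by norm_num
      rw [h00, abs_of_nonpos (by linarith)]
      linarith
    rcases lt_or_ge (1 - t) γ with h1t | h1t
    · refine ⟨n, ?_⟩
      have : Int.fract ((n:ℝ) * α) = 1 - γ := by rw [hγ]; ring
      rw [this, abs_lt]
      constructor <;> linarith
    · -- main case: γ ≤ t, γ ≤ 1 - t
      set k := ⌈(1 - t) / γ⌉₊ with hk
      have hk1 : 1 - t ≤ (k:ℝ) * γ := by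
        have := Nat.le_ceil ((1-t) / γ)
        calc 1 - t = ((1-t) / γ) * γ := by field_simp
        _ ≤ (k:ℝ) * γ := by gcongr
      have hk2 : (k:ℝ) * γ < 1 - t + γ := by
        have h2 := Nat.ceil_lt_add_one (a := (1-t) / γ) (by apply div_nonneg <;> linarith)
        calc (k:ℝ) * γ < ((1-t)/γ + 1) * γ := by gcongr
        _ = 1 - t + γ := by field_simp
      have hkγ1 : (k:ℝ) * γ < 1 := by linarith
      have hkγ0 : 0 < (k:ℝ) * γ := by linarith
      refine ⟨k * n, ?_⟩
      rw [fract_nat_mul_step]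
      have hsplit : (k:ℝ) * Int.fract ((n:ℝ) * α) = -((k:ℝ) * γ) + ((k : ℤ) : ℝ) := by
        rw [hγ]; push_cast; ring
      rw [hsplit, Int.fract_add_intCast]
      have hfl : ⌊-((k:ℝ) * γ)⌋ = -1 := by
        rw [Int.floor_eq_iff]
        push_cast
        constructor <;> linarith
      have : Int.fract (-((k:ℝ) * γ)) = 1 - (k:ℝ) * γ := by
        rw [Int.fract, hfl]
        push_cast; ring
      rw [this, abs_lt]
      constructor <;> linarith

end GLen2

namespace GLen3

/-- value of a signed-power list: entries `(s, e)` with `s = ±1` represent `s * b^e`. -/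
noncomputable def sval (b : ℤ) (l : List (ℤ × ℤ)) : ℝ :=
  (l.map (fun p => (p.1 : ℝ) * (b:ℝ) ^ p.2)).sum

def sgood (l : List (ℤ × ℤ)) : Prop := ∀ p ∈ l, p.1 = 1 ∨ p.1 = -1

/-- integer formed by the digits at exponents `≥ r`, shifted down by `r`. -/
def Yint (b : ℤ) (r : ℤ) (l : List (ℤ × ℤ)) : ℤ :=
  ((l.filter (fun p => decide (r ≤ p.2))).map (fun p => p.1 * b ^ (p.2 - r).toNat)).sum

def csum (r : ℤ) (l : List (ℤ × ℤ)) : ℤ :=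
  ((l.filter (fun p => decide (p.2 = r))).map (fun p => p.1)).sum

variable {b : ℤ} (hb : 1 < b)

lemma bpos (hb : 1 < b) : (0:ℝ) < (b:ℝ) := by
  have : (1:ℝ) < (b:ℝ) := by exact_mod_cast hb
  linarith

/-- Splitting the value at level `r`. -/
lemma sval_split (hb : 1 < b) (r : ℤ) (l : List (ℤ × ℤ)) :
    sval b l = (Yint b r l : ℝ) * (b:ℝ) ^ r + sval b (l.filter (fun p => decide (p.2 < r))) := by
  have hbne : (b:ℝ) ≠ 0 := ne_of_gt (bpos hb)
  induction l with
  | nil => simp [sval, Yint]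
  | cons p l ih =>
    by_cases hp : r ≤ p.2
    · have h1 : (List.filter (fun p => decide (r ≤ p.2)) (p :: l)) =
          p :: List.filter (fun p => decide (r ≤ p.2)) l := by
        rw [List.filter_cons_of_pos (by simpa using hp)]
      have h2 : (List.filter (fun p => decide (p.2 < r)) (p :: l)) =
          List.filter (fun p => decide (p.2 < r)) l := by
        rw [List.filter_cons_of_neg (by simpa using not_lt.2 hp)]
      simp only [sval, Yint, h1, h2, List.map_cons, List.sum_cons] at *
      rw [ih]
      push_cast
      have he : ((b:ℝ) ^ (p.2 - r).toNat) * (b:ℝ) ^ r = (b:ℝ) ^ p.2 := by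
        rw [← zpow_natCast (b:ℝ) (p.2 - r).toNat, ← zpow_add₀ hbne]
        congr 1
        omega
      push_cast
      rw [← he]
      ring
    · have h1 : (List.filter (fun p => decide (r ≤ p.2)) (p :: l)) =
          List.filter (fun p => decide (r ≤ p.2)) l := by
        rw [List.filter_cons_of_neg (by simpa using hp)]
      have h2 : (List.filter (fun p => decide (p.2 < r)) (p :: l)) =
          p :: List.filter (fun p => decide (p.2 < r)) l := by
        rw [List.filter_cons_of_pos (by simpa using not_le.1 hp)]
      simp only [sval, Yint, h1, h2, List.map_cons, List.sum_cons] at *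
      rw [ih]
      ring

/-- generic: sum of a list is bounded by length times a bound on entries. -/
lemma abs_list_sum_le (l : List ℝ) (c : ℝ) (h : ∀ x ∈ l, |x| ≤ c) :
    |l.sum| ≤ l.length * c := by
  induction l with
  | nil => simp
  | cons x l ih =>
    have h1 := h x List.mem_cons_self
    have h2 := ih (fun y hy => h y (List.mem_cons_of_mem x hy))
    simp only [List.sum_cons, List.length_cons]
    calc |x + l.sum| ≤ |x| + |l.sum| := abs_add_le _ _
    _ ≤ c + l.length * c := by linarith
    _ = (l.length + 1) * c := by ring
    _ = ((l.length + 1 : ℕ) : ℝ) * c := by push_cast; ring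

lemma abs_int_list_sum_le (l : List ℤ) (c : ℤ) (h : ∀ x ∈ l, |x| ≤ c) :
    |l.sum| ≤ l.length * c := by
  induction l with
  | nil => simp
  | cons x l ih =>
    have h1 := h x List.mem_cons_self
    have h2 := ih (fun y hy => h y (List.mem_cons_of_mem x hy))
    simp only [List.sum_cons, List.length_cons]
    calc |x + l.sum| ≤ |x| + |l.sum| := abs_add_le _ _
    _ ≤ c + l.length * c := by linarith
    _ = (l.length + 1) * c := by ring
    _ = ((l.length + 1 : ℕ) : ℤ) * c := by push_cast; ring

/-- The low part (exponents `< r`) is small. -/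
lemma low_part_small (hb : 1 < b) (r : ℤ) (l : List (ℤ × ℤ)) (hl : sgood l) :
    |sval b (l.filter (fun p => decide (p.2 < r)))| ≤ l.length * (b:ℝ) ^ (r - 1) := by
  have hb1 : (1:ℝ) < (b:ℝ) := by exact_mod_cast hb
  have := abs_list_sum_le ((l.filter (fun p => decide (p.2 < r))).map
      (fun p => (p.1 : ℝ) * (b:ℝ) ^ p.2)) ((b:ℝ) ^ (r - 1)) ?_
  · refine le_trans this ?_
    rw [List.length_map]
    have hlen : (l.filter (fun p => decide (p.2 < r))).length ≤ l.length :=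
      List.length_filter_le _ _
    have hpow : (0:ℝ) ≤ (b:ℝ) ^ (r-1) := le_of_lt (zpow_pos (bpos hb) _)
    exact mul_le_mul_of_nonneg_right (by exact_mod_cast hlen) hpow
  · intro x hx
    obtain ⟨p, hp, rfl⟩ := List.mem_map.1 hx
    have hmem := List.mem_of_mem_filter hp
    have hlt : p.2 < r := by simpa using List.of_mem_filter hp
    have hsgn : |(p.1 : ℝ)| = 1 := by
      rcases hl p hmem with h | h <;> simp [h]
    rw [abs_mul, hsgn, one_mul, abs_of_pos (zpow_pos (bpos hb) _)]
    exact zpow_le_zpow_right₀ hb1.le (by omega)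

/-- Recurrence for `Yint`. -/
lemma Yint_rec (hb : 1 < b) (r : ℤ) (l : List (ℤ × ℤ)) :
    Yint b r l = b * Yint b (r+1) l + csum r l := by
  induction l with
  | nil => simp [Yint, csum]
  | cons p l ih =>
    rcases lt_trichotomy p.2 r with h | h | h
    · have e1 : (List.filter (fun p => decide (r ≤ p.2)) (p :: l)) =
          List.filter (fun p => decide (r ≤ p.2)) l :=
        List.filter_cons_of_neg (by simpa using not_le.2 h)
      have e2 : (List.filter (fun p => decide (r+1 ≤ p.2)) (p :: l)) =
          List.filter (fun p => decide (r+1 ≤ p.2)) l :=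
        List.filter_cons_of_neg (by simp; omega)
      have e3 : (List.filter (fun p => decide (p.2 = r)) (p :: l)) =
          List.filter (fun p => decide (p.2 = r)) l :=
        List.filter_cons_of_neg (by simp; omega)
      simp only [Yint, csum, e1, e2, e3] at *
      omega
    · have e1 : (List.filter (fun p => decide (r ≤ p.2)) (p :: l)) =
          p :: List.filter (fun p => decide (r ≤ p.2)) l :=
        List.filter_cons_of_pos (by simp; omega)
      have e2 : (List.filter (fun p => decide (r+1 ≤ p.2)) (p :: l)) =
          List.filter (fun p => decide (r+1 ≤ p.2)) l :=
        List.filter_cons_of_neg (by simp; omega)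
      have e3 : (List.filter (fun p => decide (p.2 = r)) (p :: l)) =
          p :: List.filter (fun p => decide (p.2 = r)) l :=
        List.filter_cons_of_pos (by simp; omega)
      simp only [Yint, csum, e1, e2, e3, List.map_cons, List.sum_cons] at *
      have : (p.2 - r).toNat = 0 := by omega
      rw [this]
      simp only [pow_zero, mul_one]
      omega
    · have e1 : (List.filter (fun p => decide (r ≤ p.2)) (p :: l)) =
          p :: List.filter (fun p => decide (r ≤ p.2)) l :=
        List.filter_cons_of_pos (by simp; omega)
      have e2 : (List.filter (fun p => decide (r+1 ≤ p.2)) (p :: l)) =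
          p :: List.filter (fun p => decide (r+1 ≤ p.2)) l :=
        List.filter_cons_of_pos (by simp; omega)
      have e3 : (List.filter (fun p => decide (p.2 = r)) (p :: l)) =
          List.filter (fun p => decide (p.2 = r)) l :=
        List.filter_cons_of_neg (by simp; omega)
      simp only [Yint, csum, e1, e2, e3, List.map_cons, List.sum_cons] at *
      have : (p.2 - r).toNat = (p.2 - (r+1)).toNat + 1 := by omega
      rw [this, pow_succ]
      linear_combination ih

lemma csum_abs_le (r : ℤ) (l : List (ℤ × ℤ)) (hl : sgood l) :
    |csum r l| ≤ ((l.filter (fun p => decide (p.2 = r))).length : ℤ) := by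
  have := abs_int_list_sum_le ((l.filter (fun p => decide (p.2 = r))).map (fun p => p.1)) 1 ?_
  · simpa [csum] using this
  · intro x hx
    obtain ⟨p, hp, rfl⟩ := List.mem_map.1 hx
    rcases hl p (List.mem_of_mem_filter hp) with h | h <;> simp [h]

/-- Sum of counts of disjoint exponent values is at most the length. -/
lemma count_sum_le (l : List (ℤ × ℤ)) (t : ℤ) (N : ℕ) :
    (Finset.range N).sum (fun k => ((l.filter (fun p => decide (p.2 = t - 1 - k))).length : ℤ))
      ≤ (l.length : ℤ) := by
  induction l with
  | nil => simp
  | cons p l ih =>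
    have hsplit : ∀ k : ℕ, ((List.filter (fun q => decide (q.2 = t - 1 - k)) (p :: l)).length : ℤ)
        = ((l.filter (fun q => decide (q.2 = t - 1 - k))).length : ℤ) +
          (if p.2 = t - 1 - (k:ℤ) then 1 else 0) := by
      intro k
      by_cases h : p.2 = t - 1 - (k:ℤ)
      · rw [List.filter_cons_of_pos (by simpa using h), if_pos h]
        push_cast [List.length_cons]; ring
      · rw [List.filter_cons_of_neg (by simpa using h), if_neg h]
        ring
    have hind : (Finset.range N).sum (fun k => if p.2 = t - 1 - (k:ℤ) then (1:ℤ) else 0) ≤ 1 := by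
      classical
      have hle : (Finset.range N).sum (fun k => if p.2 = t - 1 - (k:ℤ) then (1:ℤ) else 0)
          ≤ (Finset.range N).sum (fun k => if k = (t - 1 - p.2).toNat then (1:ℤ) else 0) := by
        apply Finset.sum_le_sum
        intro k _
        by_cases h : p.2 = t - 1 - (k:ℤ)
        · rw [if_pos h, if_pos (by omega)]
        · rw [if_neg h]
          split <;> norm_num
      refine hle.trans ?_
      rw [Finset.sum_ite_eq' (Finset.range N) ((t - 1 - p.2).toNat) (fun _ => (1:ℤ))]
      split <;> norm_num
    simp only [hsplit, Finset.sum_add_distrib, List.length_cons]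
    push_cast
    linarith


lemma filter_length_lt {α : Type*} (p : α → Bool) (l : List α) (x : α)
    (hx : x ∈ l) (hpx : ¬ p x = true) : (l.filter p).length < l.length := by
  induction l with
  | nil => simp at hx
  | cons y l ih =>
    rcases List.mem_cons.1 hx with rfl | hx'
    · rw [List.filter_cons_of_neg (by simpa using hpx)]
      have := List.length_filter_le p l
      simp only [List.length_cons]
      omega
    · by_cases hy : p y = true
      · rw [List.filter_cons_of_pos hy]
        simp only [List.length_cons]
        exact Nat.succ_lt_succ (ih hx')
      · rw [List.filter_cons_of_neg (by simpa using hy)]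
        have := ih hx'
        simp only [List.length_cons]
        omega

/-- Bound on `|Yint b 1 l|`. -/
lemma Yint_one_abs_le (hb : 1 < b) (l : List (ℤ × ℤ)) (hg : sgood l)
    (h2 : |sval b l| ≤ (b:ℝ)) (L : ℕ) (hL : l.length ≤ L) :
    |Yint b 1 l| ≤ 1 + (L:ℤ) := by
  have hbR : (1:ℝ) < (b:ℝ) := by exact_mod_cast hb
  have hsplit := sval_split hb 1 l
  have hlow := low_part_small hb 1 l hg
  have hY : |(Yint b 1 l : ℝ)| * (b:ℝ) ≤ (b:ℝ) + L := by
    have h3 : (Yint b 1 l : ℝ) * (b:ℝ) ^ (1:ℤ) =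
        sval b l - sval b (l.filter (fun p => decide (p.2 < 1))) := by linarith [hsplit]
    have h4 : |(Yint b 1 l : ℝ) * (b:ℝ) ^ (1:ℤ)| ≤ (b:ℝ) + L := by
      rw [h3]
      have := abs_sub (sval b l) (sval b (l.filter (fun p => decide (p.2 < 1))))
      have h5 : |sval b (l.filter (fun p => decide (p.2 < 1)))| ≤ (L:ℝ) := by
        refine le_trans hlow ?_
        simp only [sub_self, zpow_zero, mul_one]
        exact_mod_cast hL
      calc |sval b l - sval b (l.filter (fun p => decide (p.2 < 1)))|
          ≤ |sval b l| + |sval b (l.filter (fun p => decide (p.2 < 1)))| := abs_sub _ _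
      _ ≤ (b:ℝ) + L := by linarith
    rw [abs_mul] at h4
    have : |(b:ℝ) ^ (1:ℤ)| = (b:ℝ) := by
      rw [zpow_one, abs_of_pos (by linarith)]
    rw [this] at h4
    exact h4
  have hb0 : (0:ℝ) < (b:ℝ) := by linarith
  have h8 : (|Yint b 1 l| : ℝ) * (b:ℝ) ≤ ((1:ℝ) + L) * (b:ℝ) := by
    have hLb : (L:ℝ) ≤ (L:ℝ) * (b:ℝ) := le_mul_of_one_le_right (by positivity) (by linarith)
    nlinarith [hY]
  have h9 := le_of_mul_le_mul_right h8 hb0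
  exact_mod_cast h9

set_option maxHeartbeats 1000000 in
/-- Key truncation lemma: a short signed-power representation of a number in `[1, b]`
can be replaced by one with all exponents at most `2L + 2`. -/
lemma truncation_aux (hb : 1 < b) (L : ℕ) : ∀ n : ℕ, ∀ l : List (ℤ × ℤ), l.length = n →
    l.length ≤ L → sgood l → 1 ≤ sval b l → sval b l ≤ (b:ℝ) →
    ∃ l' : List (ℤ × ℤ), l'.length ≤ L ∧ sgood l' ∧
      (∀ p ∈ l', p.2 ≤ 2*(L:ℤ) + 2) ∧ sval b l' = sval b l := by
  intro n
  induction n using Nat.strong_induction_on with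
  | _ n ih =>
  intro l hn hL hg h1 h2
  by_cases hexp : ∀ p ∈ l, p.2 ≤ 2*(L:ℤ) + 2
  · exact ⟨l, hL, hg, hexp, rfl⟩
  push_neg at hexp
  obtain ⟨p0, hp0mem, hp0⟩ := hexp
  have hp0snd : p0.2 ∈ l.map Prod.snd := List.mem_map.2 ⟨p0, hp0mem, rfl⟩
  have hs_ne : (l.map Prod.snd).toFinset.Nonempty := ⟨p0.2, List.mem_toFinset.2 hp0snd⟩
  set t := (l.map Prod.snd).toFinset.max' hs_ne with ht
  have htmem : t ∈ l.map Prod.snd := List.mem_toFinset.1 (Finset.max'_mem _ hs_ne)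
  have htmax : ∀ p ∈ l, p.2 ≤ t := by
    intro p hp
    exact Finset.le_max' _ _ (List.mem_toFinset.2 (List.mem_map.2 ⟨p, hp, rfl⟩))
  have htbig : 2*(L:ℤ) + 2 < t := lt_of_lt_of_le hp0 (htmax p0 hp0mem)
  have habs2 : |sval b l| ≤ (b:ℝ) := by
    rw [abs_of_pos (by linarith)]; exact h2
  -- find a level where Yint vanishes
  have hzero : ∃ r : ℤ, 1 ≤ r ∧ r ≤ t ∧ Yint b r l = 0 := by
    by_contra hno
    push_neg at hno
    set N : ℕ := (t - 1).toNat with hN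
    have hNt : (N:ℤ) = t - 1 := Int.toNat_of_nonneg (by omega)
    set g : ℕ → ℤ := fun k => |Yint b (t - (k:ℤ)) l| with hgdef
    have hg1 : ∀ k : ℕ, (k:ℤ) ≤ t - 1 → 1 ≤ g k := by
      intro k hk
      exact Int.one_le_abs (hno (t - (k:ℤ)) (by omega) (by omega))
    have hstep : ∀ k : ℕ, b * g k ≤ g (k+1) + |csum (t - 1 - (k:ℤ)) l| := by
      intro k
      have hrec := Yint_rec hb (t - 1 - (k:ℤ)) l
      have he : t - 1 - (k:ℤ) + 1 = t - (k:ℤ) := by ring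
      rw [he] at hrec
      have he2 : t - ((k:ℤ) + 1) = t - 1 - (k:ℤ) := by ring
      have : b * g k = |b * Yint b (t - (k:ℤ)) l| := by
        rw [hgdef]
        simp only []
        rw [abs_mul, abs_of_pos (by omega : (0:ℤ) < b)]
      rw [this]
      have : b * Yint b (t - (k:ℤ)) l = Yint b (t - 1 - (k:ℤ)) l - csum (t - 1 - (k:ℤ)) l := by
        omega
      rw [this]
      have habs := abs_sub (Yint b (t - 1 - (k:ℤ)) l) (csum (t - 1 - (k:ℤ)) l)
      have : g (k+1) = |Yint b (t - 1 - (k:ℤ)) l| := by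
        rw [hgdef]
        simp only []
        congr 1
        push_cast
        ring_nf
      rw [this]
      exact habs
    -- sum over k < N
    have hsum1 : (Finset.range N).sum (fun k => b * g k)
        ≤ (Finset.range N).sum (fun k => g (k+1))
          + (Finset.range N).sum (fun k => |csum (t - 1 - (k:ℤ)) l|) := by
      rw [← Finset.sum_add_distrib]
      exact Finset.sum_le_sum (fun k _ => hstep k)
    have hcsum : (Finset.range N).sum (fun k => |csum (t - 1 - (k:ℤ)) l|) ≤ (L:ℤ) := by
      calc (Finset.range N).sum (fun k => |csum (t - 1 - (k:ℤ)) l|)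
          ≤ (Finset.range N).sum
            (fun k => ((l.filter (fun p => decide (p.2 = t - 1 - (k:ℤ)))).length : ℤ)) :=
            Finset.sum_le_sum (fun k _ => csum_abs_le _ l hg)
      _ ≤ (l.length : ℤ) := count_sum_le l t N
      _ ≤ (L:ℤ) := by exact_mod_cast hL
    have hshift : (Finset.range N).sum (fun k => g (k+1))
        = (Finset.range N).sum (fun k => g k) + g N - g 0 := by
      have e1 := Finset.sum_range_succ g N
      have e2 := Finset.sum_range_succ' g N
      omega
    have hS : (N:ℤ) ≤ (Finset.range N).sum (fun k => g k) := by
      calc (N:ℤ) = (Finset.range N).sum (fun _ => (1:ℤ)) := by simp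
      _ ≤ (Finset.range N).sum (fun k => g k) := by
          apply Finset.sum_le_sum
          intro k hk
          apply hg1
          have := Finset.mem_range.1 hk
          omega
    have hgN : g N ≤ 1 + (L:ℤ) := by
      have harg : t - (N:ℤ) = 1 := by omega
      have hgn : g N = |Yint b 1 l| := by
        rw [hgdef]
        simp only []
        rw [harg]
      rw [hgn]
      exact Yint_one_abs_le hb l hg habs2 L hL
    have hg0 : 1 ≤ g 0 := hg1 0 (by omega)
    have hmul : b * (Finset.range N).sum (fun k => g k) = (Finset.range N).sum (fun k => b * g k) := by
      rw [Finset.mul_sum]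
    -- combine: (b-1) * S ≤ 2L, S ≥ N, N = t-1 ≥ 2L+2
    have hfinal : b * (Finset.range N).sum (fun k => g k) ≤ (Finset.range N).sum (fun k => g k) + 2 * (L:ℤ) := by
      linarith [hsum1, hcsum, hshift, hmul, hgN, hg0]
    set S := (Finset.range N).sum (fun k => g k)
    have hb2 : 2 ≤ b := by omega
    nlinarith [hS, hfinal, hNt, htbig]
  obtain ⟨r, hr1, hrt, hY0⟩ := hzero
  set l2 := l.filter (fun p => decide (p.2 < r)) with hl2
  have hsum : sval b l2 = sval b l := by
    have := sval_split hb r l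
    rw [hY0] at this
    simp at this
    rw [this]
  obtain ⟨q, hq, hqt⟩ := List.mem_map.1 htmem
  have hlen : l2.length < l.length := by
    apply filter_length_lt _ l q hq
    simp only [decide_eq_true_eq]
    omega
  have hg2 : sgood l2 := fun p hp => hg p (List.mem_of_mem_filter hp)
  obtain ⟨l', hl'1, hl'2, hl'3, hl'4⟩ := ih l2.length (by omega) l2 rfl (by omega) hg2
    (by rw [hsum]; exact h1) (by rw [hsum]; exact h2)
  exact ⟨l', hl'1, hl'2, hl'3, by rw [hl'4, hsum]⟩
end GLen3

namespace GLen4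
open GLen3

/-- Values of signed-power sums with at most `k` terms and exponents `≤ T`. -/
def DD (b : ℤ) (T : ℤ) (k : ℕ) : Set ℝ :=
  {x | ∃ l : List (ℤ × ℤ), l.length ≤ k ∧ sgood l ∧ (∀ p ∈ l, p.2 ≤ T) ∧ sval b l = x}

lemma DD_countable (b T : ℤ) (k : ℕ) : (DD b T k).Countable := by
  apply Set.Countable.mono _ (Set.countable_range (fun l : List (ℤ × ℤ) => sval b l))
  rintro x ⟨l, _, _, _, hx⟩
  exact ⟨l, hx⟩

lemma zero_mem_DD (b T : ℤ) (k : ℕ) : (0:ℝ) ∈ DD b T k :=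
  ⟨[], by simp, by simp [sgood], by simp, by simp [sval]⟩

lemma DD_zero (b T : ℤ) : DD b T 0 = {0} := by
  ext x
  constructor
  · rintro ⟨l, hl, _, _, rfl⟩
    rw [Nat.le_zero, List.length_eq_zero_iff] at hl
    simp [hl, sval]
  · rintro rfl
    exact zero_mem_DD b T 0

lemma DD_mono (b T : ℤ) {k k' : ℕ} (h : k ≤ k') : DD b T k ⊆ DD b T k' := by
  rintro x ⟨l, hl, h1, h2, h3⟩
  exact ⟨l, hl.trans h, h1, h2, h3⟩

lemma cons_mem_DD (b T : ℤ) (k : ℕ) (s e : ℤ) (hs : s = 1 ∨ s = -1) (he : e ≤ T)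
    {y : ℝ} (hy : y ∈ DD b T k) : (s:ℝ) * (b:ℝ) ^ e + y ∈ DD b T (k+1) := by
  obtain ⟨l, hl, h1, h2, h3⟩ := hy
  refine ⟨(s, e) :: l, by simpa using hl, ?_, ?_, ?_⟩
  · intro p hp
    rcases List.mem_cons.1 hp with rfl | hp'
    · exact hs
    · exact h1 p hp'
  · intro p hp
    rcases List.mem_cons.1 hp with rfl | hp'
    · exact he
    · exact h2 p hp'
  · simp [sval, h3]
    rw [← h3]
    rfl

lemma DD_succ_cases (b T : ℤ) (k : ℕ) {x : ℝ} (hx : x ∈ DD b T (k+1)) :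
    x ∈ DD b T k ∨ ∃ s e : ℤ, (s = 1 ∨ s = -1) ∧ e ≤ T ∧
      ∃ y ∈ DD b T k, x = (s:ℝ) * (b:ℝ) ^ e + y := by
  obtain ⟨l, hl, h1, h2, h3⟩ := hx
  cases l with
  | nil => left; rw [← h3]; simpa [sval] using zero_mem_DD b T k
  | cons p l' =>
    right
    refine ⟨p.1, p.2, h1 p List.mem_cons_self, h2 p List.mem_cons_self,
      sval b l', ⟨l', ?_, ?_, ?_, rfl⟩, ?_⟩
    · simpa using Nat.lt_succ_iff.1 (by simpa [Nat.lt_succ_iff] using hl)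
    · exact fun q hq => h1 q (List.mem_cons_of_mem _ hq)
    · exact fun q hq => h2 q (List.mem_cons_of_mem _ hq)
    · rw [← h3]; simp [sval]

lemma DD_closed {b : ℤ} (hb : 1 < b) (T : ℤ) : ∀ k, IsClosed (DD b T k) := by
  intro k
  induction k with
  | zero => rw [DD_zero]; exact isClosed_singleton
  | succ k ihk =>
    rw [← closure_subset_iff_isClosed]
    intro x hx
    by_contra hxin
    have hbR : (1:ℝ) < (b:ℝ) := by exact_mod_cast hb
    -- x is in every cthickening of DD b T k
    have key : ∀ δ : ℝ, 0 < δ → x ∈ Metric.cthickening δ (DD b T k) := by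
      intro δ hδ
      -- choose Z with b^Z < δ
      obtain ⟨n, hn⟩ := pow_unbounded_of_one_lt (1/δ) hbR
      set Z : ℤ := -(n:ℤ) with hZ
      have hZδ : (b:ℝ) ^ Z < δ := by
        rw [hZ, zpow_neg, zpow_natCast]
        rw [div_lt_iff₀ hδ] at hn
        rw [inv_lt_iff_one_lt_mul₀ (by positivity)]
        nlinarith
      set E : Set ℝ := DD b T k ∪
          (⋃ e ∈ Finset.Icc Z T, ((fun y => ((1:ℝ)) * (b:ℝ) ^ e + y) '' DD b T k)) ∪
          (⋃ e ∈ Finset.Icc Z T, ((fun y => (-1:ℝ) * (b:ℝ) ^ e + y) '' DD b T k)) with hE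
      have hEclosed : IsClosed E := by
        refine IsClosed.union (IsClosed.union ihk ?_) ?_
        · apply isClosed_biUnion_finset
          intro e _
          exact (Homeomorph.addLeft ((1:ℝ) * (b:ℝ) ^ e)).isClosedMap _ ihk
        · apply isClosed_biUnion_finset
          intro e _
          exact (Homeomorph.addLeft ((-1:ℝ) * (b:ℝ) ^ e)).isClosedMap _ ihk
      have hEsub : E ⊆ DD b T (k+1) := by
        rintro y (hy | hy)
        · rcases hy with hy | hy
          · exact DD_mono b T (Nat.le_succ k) hy
          · simp only [Set.mem_iUnion] at hy
            obtain ⟨e, he, y', hy', rfl⟩ := hy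
            have := cons_mem_DD b T k 1 e (Or.inl rfl) (Finset.mem_Icc.1 he).2 hy'
            simpa using this
        · simp only [Set.mem_iUnion] at hy
          obtain ⟨e, he, y', hy', rfl⟩ := hy
          have := cons_mem_DD b T k (-1) e (Or.inr rfl) (Finset.mem_Icc.1 he).2 hy'
          simpa using this
      have hsub : DD b T (k+1) ⊆ E ∪ Metric.thickening δ (DD b T k) := by
        intro y hy
        rcases DD_succ_cases b T k hy with hy' | ⟨s, e, hs, heT, y', hy', rfl⟩
        · exact Or.inl (Or.inl (Or.inl hy'))
        · rcases le_or_gt Z e with hZe | heZ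
          · left
            rcases hs with rfl | rfl
            · refine Or.inl (Or.inr ?_)
              simp only [Set.mem_iUnion]
              exact ⟨e, Finset.mem_Icc.2 ⟨hZe, heT⟩, y', hy', by norm_num⟩
            · refine Or.inr ?_
              simp only [Set.mem_iUnion]
              exact ⟨e, Finset.mem_Icc.2 ⟨hZe, heT⟩, y', hy', by norm_num⟩
          · right
            rw [Metric.mem_thickening_iff]
            refine ⟨y', hy', ?_⟩
            have : dist ((s:ℝ) * (b:ℝ) ^ e + y') y' = |(s:ℝ)| * (b:ℝ) ^ e := by
              rw [Real.dist_eq]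
              have : (s:ℝ) * (b:ℝ) ^ e + y' - y' = (s:ℝ) * (b:ℝ) ^ e := by ring
              rw [this, abs_mul, abs_of_pos (zpow_pos (by linarith : (0:ℝ) < (b:ℝ)) _)]
            rw [this]
            have hsabs : |(s:ℝ)| = 1 := by rcases hs with rfl | rfl <;> norm_num
            rw [hsabs, one_mul]
            calc (b:ℝ) ^ e ≤ (b:ℝ) ^ (Z - 1) := zpow_le_zpow_right₀ hbR.le (by omega)
            _ < (b:ℝ) ^ Z := zpow_lt_zpow_right₀ hbR (by omega)
            _ < δ := hZδ
      have hclos : closure (DD b T (k+1)) ⊆ E ∪ Metric.cthickening δ (DD b T k) := by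
        calc closure (DD b T (k+1)) ⊆ closure (E ∪ Metric.thickening δ (DD b T k)) :=
              closure_mono hsub
        _ = closure E ∪ closure (Metric.thickening δ (DD b T k)) := closure_union
        _ ⊆ E ∪ Metric.cthickening δ (DD b T k) := by
            apply Set.union_subset_union
            · rw [hEclosed.closure_eq]
            · exact Metric.closure_thickening_subset_cthickening δ _
      rcases hclos hx with hxE | hxc
      · exact absurd (hEsub hxE) hxin
      · exact hxc
    have : x ∈ closure (DD b T k) := by
      rw [Metric.closure_eq_iInter_cthickening]
      simp only [Set.mem_iInter]
      intro δ hδ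
      exact key δ hδ
    rw [ihk.closure_eq] at this
    exact hxin (DD_mono b T (Nat.le_succ k) this)

end GLen4

namespace GLen5
open GLen3 GLen4

lemma irrational_of_no_rel (a b : ℤ) (ha : 1 < a) (hb : 1 < b)
    (h : ¬ ∃ m n : ℕ, 0 < m ∧ 0 < n ∧ a ^ m = b ^ n) :
    Irrational (Real.log a / Real.log b) := by
  have haR : (1:ℝ) < (a:ℝ) := by exact_mod_cast ha
  have hbR : (1:ℝ) < (b:ℝ) := by exact_mod_cast hb
  have hla : 0 < Real.log a := Real.log_pos haR
  have hlb : 0 < Real.log b := Real.log_pos hbR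
  rintro ⟨q, hq⟩
  have hq0 : 0 < (q:ℝ) := by rw [hq]; positivity
  have hqQ : 0 < q := by exact_mod_cast hq0
  have hnum : 0 < q.num := Rat.num_pos.2 hqQ
  apply h
  refine ⟨q.den, q.num.toNat, q.pos, by omega, ?_⟩
  have hden0 : (0:ℝ) < (q.den : ℝ) := by exact_mod_cast q.pos
  have hcast : (q:ℝ) = (q.num : ℝ) / (q.den : ℝ) := by rw [Rat.cast_def]
  have key : (q.den : ℝ) * Real.log a = (q.num : ℝ) * Real.log b := by
    rw [hcast] at hq
    field_simp at hq
    linarith [hq]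
  have hlog : Real.log ((a:ℝ) ^ q.den) = Real.log ((b:ℝ) ^ q.num.toNat) := by
    rw [Real.log_pow, Real.log_pow]
    have : ((q.num.toNat : ℕ) : ℝ) = (q.num : ℝ) := by
      exact_mod_cast congrArg (Int.cast : ℤ → ℝ) (Int.toNat_of_nonneg hnum.le)
    rw [this]
    push_cast
    linarith [key]
  have hexp : ((a:ℝ)) ^ q.den = ((b:ℝ)) ^ q.num.toNat := by
    have h1 : (0:ℝ) < (a:ℝ) ^ q.den := by positivity
    have h2 : (0:ℝ) < (b:ℝ) ^ q.num.toNat := by positivity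
    calc (a:ℝ) ^ q.den = Real.exp (Real.log ((a:ℝ) ^ q.den)) := (Real.exp_log h1).symm
    _ = Real.exp (Real.log ((b:ℝ) ^ q.num.toNat)) := by rw [hlog]
    _ = (b:ℝ) ^ q.num.toNat := Real.exp_log h2
  exact_mod_cast hexp

lemma entry_val (b : ℤ) (hb : 1 < b) (M : ℤ) (z : ℤ) (h : ∃ e : ℕ, z = b^e ∨ z = -b^e) :
    (((if 0 < z then (1:ℤ) else -1) : ℤ) : ℝ) * (b:ℝ) ^ ((Nat.log b.natAbs z.natAbs : ℤ) - M)
      = (z:ℝ) * (b:ℝ) ^ (-M) := by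
  have hb0 : (0:ℝ) < (b:ℝ) := by exact_mod_cast (by omega : (0:ℤ) < b)
  have hbne : (b:ℝ) ≠ 0 := ne_of_gt hb0
  have hbe : ∀ e : ℕ, (0:ℤ) < b ^ e := fun e => pow_pos (by omega) e
  obtain ⟨e, he | he⟩ := h
  · have hz : 0 < z := by rw [he]; exact hbe e
    rw [if_pos hz]
    have hnat : z.natAbs = b.natAbs ^ e := by rw [he, Int.natAbs_pow]
    have hlog : Nat.log b.natAbs z.natAbs = e := by
      rw [hnat]; exact Nat.log_pow (by omega) e
    rw [hlog, sub_eq_add_neg, zpow_add₀ hbne, zpow_natCast, he]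
    push_cast
    ring
  · have hz : ¬ 0 < z := by rw [he]; have := hbe e; omega
    rw [if_neg hz]
    have hnat : z.natAbs = b.natAbs ^ e := by rw [he, Int.natAbs_neg, Int.natAbs_pow]
    have hlog : Nat.log b.natAbs z.natAbs = e := by
      rw [hnat]; exact Nat.log_pow (by omega) e
    rw [hlog, sub_eq_add_neg, zpow_add₀ hbne, zpow_natCast, he]
    push_cast
    ring

lemma conv_sum (b : ℤ) (hb : 1 < b) (M : ℤ) (l : List ℤ)
    (hl : ∀ z ∈ l, ∃ e : ℕ, z = b^e ∨ z = -b^e) :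
    sval b (l.map (fun z => ((if 0 < z then (1:ℤ) else -1),
        (Nat.log b.natAbs z.natAbs : ℤ) - M)))
      = (l.sum : ℝ) * (b:ℝ) ^ (-M) := by
  induction l with
  | nil => simp [sval]
  | cons z l ih =>
    have h1 := entry_val b hb M z (hl z List.mem_cons_self)
    have h2 := ih (fun w hw => hl w (List.mem_cons_of_mem _ hw))
    simp only [List.map_cons, sval, List.sum_cons] at *
    rw [h1, h2]
    push_cast
    ring

lemma u_mem_DD (a b : ℤ) (ha : 1 < a) (hb : 1 < b) (K0 : ℕ) (hK0 : 0 < K0)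
    (hlen : ∀ i : ℕ, geomLength b (a^i) ≤ K0) (i : ℕ) :
    Real.exp (Int.fract ((i:ℝ) * (Real.log a / Real.log b)) * Real.log b)
      ∈ DD b (2*(K0:ℤ)+2) K0 := by
  have haR : (1:ℝ) < (a:ℝ) := by exact_mod_cast ha
  have hbR : (1:ℝ) < (b:ℝ) := by exact_mod_cast hb
  have hla : 0 < Real.log a := Real.log_pos haR
  have hlb : 0 < Real.log b := Real.log_pos hbR
  set α := Real.log a / Real.log b with hα
  have hα0 : 0 < α := div_pos hla hlb
  set u := Real.exp (Int.fract ((i:ℝ) * α) * Real.log b) with hu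
  -- floor is nonnegative
  have hiα : 0 ≤ (i:ℝ) * α := mul_nonneg (Nat.cast_nonneg i) hα0.le
  set m : ℕ := (⌊(i:ℝ) * α⌋).toNat with hm
  have hmc : ((m:ℕ) : ℝ) = (⌊(i:ℝ) * α⌋ : ℝ) := by
    rw [hm]
    exact_mod_cast congrArg Int.cast (Int.toNat_of_nonneg (Int.floor_nonneg.2 hiα))
  -- u = a^i * b^(-m)
  have hexp_eq : Int.fract ((i:ℝ) * α) * Real.log b
      = (i:ℝ) * Real.log a - (m:ℝ) * Real.log b := by
    rw [Int.fract, hmc, sub_mul]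
    congr 1
    rw [mul_assoc, hα, div_mul_cancel₀ _ (ne_of_gt hlb)]
  have huval : u = (a:ℝ) ^ i * ((b:ℝ) ^ m)⁻¹ := by
    rw [hu, hexp_eq, Real.exp_sub, Real.exp_nat_mul, Real.exp_nat_mul,
      Real.exp_log (by linarith : (0:ℝ) < (a:ℝ)), Real.exp_log (by linarith : (0:ℝ) < (b:ℝ))]
    rw [div_eq_mul_inv]
  -- representation list
  obtain ⟨l, hllen, hl1, hl2⟩ := GLen.exists_min_list b (a ^ i)
  have hlK : l.length ≤ K0 := by rw [hllen]; exact hlen i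
  set lc := l.map (fun z => ((if 0 < z then (1:ℤ) else -1),
      (Nat.log b.natAbs z.natAbs : ℤ) - (m:ℤ))) with hlc
  have hsum : sval b lc = u := by
    rw [hlc, conv_sum b hb (m:ℤ) l hl1, hl2, huval]
    rw [zpow_neg, zpow_natCast]
    push_cast
    ring
  have hg : sgood lc := by
    intro p hp
    rw [hlc] at hp
    obtain ⟨z, _, rfl⟩ := List.mem_map.1 hp
    by_cases h : 0 < z <;> simp [h]
  have hu1 : 1 ≤ u := by
    rw [hu]
    have : 0 ≤ Int.fract ((i:ℝ) * α) * Real.log b :=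
      mul_nonneg (Int.fract_nonneg _) hlb.le
    exact Real.one_le_exp this
  have hub : u ≤ (b:ℝ) := by
    rw [hu]
    have h1 : Int.fract ((i:ℝ) * α) * Real.log b ≤ Real.log b := by
      nlinarith [Int.fract_lt_one ((i:ℝ) * α), Int.fract_nonneg ((i:ℝ) * α)]
    calc Real.exp (Int.fract ((i:ℝ) * α) * Real.log b) ≤ Real.exp (Real.log b) :=
        Real.exp_le_exp.2 h1
    _ = (b:ℝ) := Real.exp_log (by linarith)
  have hlclen : lc.length ≤ K0 := by rw [hlc, List.length_map]; exact hlK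
  obtain ⟨l', h1, h2, h3, h4⟩ := truncation_aux hb K0 lc.length lc rfl hlclen hg
    (by rw [hsum]; exact hu1) (by rw [hsum]; exact hub)
  exact ⟨l', h1, h2, h3, by rw [h4, hsum]⟩

lemma hard_dir (a b : ℤ) (ha : 1 < a) (hb : 1 < b)
    (h : ∃ K : ℝ, 1 ≤ K ∧ ∀ x y : ℤ,
      (1 / K) * geomDist a x y ≤ geomDist b x y ∧
      geomDist b x y ≤ K * geomDist a x y) :
    ∃ m n : ℕ, 0 < m ∧ 0 < n ∧ a ^ m = b ^ n := by
  by_contra hcon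
  obtain ⟨K, hK1, hK⟩ := h
  have haR : (1:ℝ) < (a:ℝ) := by exact_mod_cast ha
  have hbR : (1:ℝ) < (b:ℝ) := by exact_mod_cast hb
  have hla : 0 < Real.log a := Real.log_pos haR
  have hlb : 0 < Real.log b := Real.log_pos hbR
  have hirr := irrational_of_no_rel a b ha hb hcon
  set α := Real.log a / Real.log b with hα
  set K0 := ⌊K⌋₊ with hK0
  have hK0pos : 0 < K0 := by
    rw [hK0]
    exact Nat.floor_pos.2 hK1
  have hlen : ∀ i : ℕ, geomLength b (a^i) ≤ K0 := by
    intro i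
    have h2 := (hK (a^i) 0).2
    have e1 : geomDist a (a^i) 0 = (geomLength a (a^i) : ℝ) := by simp [geomDist]
    have e2 : geomDist b (a^i) 0 = (geomLength b (a^i) : ℝ) := by simp [geomDist]
    rw [e1, e2] at h2
    have hla1 : (geomLength a (a^i) : ℝ) ≤ 1 := by exact_mod_cast GLen.geomLength_pow_le a i
    have : (geomLength b (a^i) : ℝ) ≤ K := by
      calc (geomLength b (a^i) : ℝ) ≤ K * (geomLength a (a^i) : ℝ) := h2
      _ ≤ K * 1 := by
          apply mul_le_mul_of_nonneg_left hla1
          linarith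
      _ = K := mul_one K
    exact Nat.le_floor this
  set T : ℤ := 2*(K0:ℤ)+2 with hT
  set Dset := DD b T K0 with hD
  have hIcc : Set.Icc (1:ℝ) (b:ℝ) ⊆ Dset := by
    intro x hx
    obtain ⟨hx1, hxb⟩ := hx
    have hx0 : (0:ℝ) < x := by linarith
    set t := Real.log x / Real.log b with htdef
    have ht0 : 0 ≤ t := div_nonneg (Real.log_nonneg hx1) hlb.le
    have ht1 : t ≤ 1 := by
      rw [htdef, div_le_one hlb]
      calc Real.log x ≤ Real.log b := Real.log_le_log hx0 hxb
      _ = 1 * Real.log b := (one_mul _).symm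
      _ = Real.log b := one_mul _
    set f : ℝ → ℝ := fun s => Real.exp (s * Real.log b) with hf
    have hfc : Continuous f := Real.continuous_exp.comp (continuous_id.mul continuous_const)
    have hft : f t = x := by
      rw [hf]
      simp only []
      rw [htdef, div_mul_cancel₀ _ (ne_of_gt hlb), Real.exp_log hx0]
    set S := Set.range (fun i : ℕ => Int.fract ((i:ℝ) * α)) with hS
    have htcl : t ∈ closure S := by
      rw [Metric.mem_closure_iff]
      intro ε hε
      obtain ⟨i, hi⟩ := GLen2.dense_fract α hirr t ε ht0 ht1 hε
      exact ⟨Int.fract ((i:ℝ) * α), ⟨i, rfl⟩, by rw [Real.dist_eq, abs_sub_comm]; exact hi⟩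
    have hxcl : x ∈ closure (f '' S) := by
      rw [← hft]
      exact (image_closure_subset_closure_image hfc) (Set.mem_image_of_mem f htcl)
    have himg : f '' S ⊆ Dset := by
      rintro y ⟨s, ⟨i, rfl⟩, rfl⟩
      exact u_mem_DD a b ha hb K0 hK0pos hlen i
    have : x ∈ closure Dset := closure_mono himg hxcl
    rwa [(DD_closed hb T K0).closure_eq] at this
  have hcnt : (Set.Icc (1:ℝ) (b:ℝ)).Countable := (DD_countable b T K0).mono hIcc
  have hvol := Set.Countable.measure_zero hcnt MeasureTheory.volume
  rw [Real.volume_Icc] at hvol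
  rw [ENNReal.ofReal_eq_zero] at hvol
  linarith

end GLen5


theorem stmt_14 (a b : ℤ) (ha : 1 < a) (hb : 1 < b) :
    (∃ K : ℝ, 1 ≤ K ∧ ∀ x y : ℤ,
      (1 / K) * geomDist a x y ≤ geomDist b x y ∧
      geomDist b x y ≤ K * geomDist a x y) ↔
    (∃ m n : ℕ, 0 < m ∧ 0 < n ∧ a ^ m = b ^ n) := by
  constructor
  · exact GLen5.hard_dir a b ha hb
  · exact GLen.easy_dir a b
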